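/- The generalized Gončarov basis (t_n) associated with (𝔡, Z) is a sequence of binomial type (t_n(x+y) = Σ_k C(n,k) t_k(x) t_{n−k}(y)) if and only if Z is an arithmetic grid with initial term 0, i.e., z_i = i·b for some b ∈ K. -/
import Mathlib


open Polynomial

/-- The shift operator `E_a : K[x] → K[x]`, `f(x) ↦ f(x+a)`, as a linear endomorphism. -/
noncomputable def shiftOp (K : Type*) [Field K] (a : K) : Module.End K (Polynomial K) :=
  (aeval (X + C a) : Polynomial K →ₐ[K] Polynomial K).toLinearMap

/-- A linear operator on `K[x]` is shift-invariant if it commutes with every shift `E_a`. -/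
def IsShiftInvariant {K : Type*} [Field K] (s : Module.End K (Polynomial K)) : Prop :=
  ∀ a : K, s ∘ₗ shiftOp K a = shiftOp K a ∘ₗ s

/-- A delta operator: shift-invariant and sends `X` to a nonzero constant. -/
def IsDeltaOperator {K : Type*} [Field K] (d : Module.End K (Polynomial K)) : Prop :=
  IsShiftInvariant d ∧ ∃ c : K, c ≠ 0 ∧ d X = C c

/-- The sequence of basic polynomials of a delta operator `d`. -/
def IsBasicSequence {K : Type*} [Field K] (d : Module.End K (Polynomial K))
    (p : ℕ → Polynomial K) : Prop :=
  p 0 = 1 ∧ (∀ n, 1 ≤ n → (p n).eval 0 = 0) ∧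
    ∀ n, 1 ≤ n → d (p n) = (n : K) • p (n - 1)

/-- The generalized Gončarov basis associated with the pair `(d, z)`:
`deg t_n = n` and `ε_{z_i}(d^i t_n) = n! δ_{i,n}`. -/
def IsGoncarovBasis {K : Type*} [Field K] (d : Module.End K (Polynomial K))
    (z : ℕ → K) (t : ℕ → Polynomial K) : Prop :=
  ∀ n, (t n).natDegree = n ∧
    ∀ i, ((d ^ i) (t n)).eval (z i) = if i = n then (n.factorial : K) else 0

set_option linter.unusedSectionVars false

section aux
variable {K : Type*} [Field K]

lemma shiftOp_apply (a : K) (p : K[X]) : shiftOp K a p = p.comp (X + C a) := by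
  simp [shiftOp, comp, aeval_def, algebraMap_eq]

lemma shiftOp_eval (a x : K) (p : K[X]) : (shiftOp K a p).eval x = p.eval (x + a) := by
  rw [shiftOp_apply, eval_comp]; simp

lemma shiftOp_shiftOp (a b : K) (p : K[X]) :
    shiftOp K a (shiftOp K b p) = shiftOp K (b + a) p := by
  rw [shiftOp_apply, shiftOp_apply, shiftOp_apply, comp_assoc]
  congr 1
  simp only [add_comp, X_comp, C_comp, C_add]
  ring

variable {d : Module.End K (Polynomial K)}

lemma shift_comm_single (hs : IsShiftInvariant d) (a : K) (f : K[X]) :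
    d (shiftOp K a f) = shiftOp K a (d f) := by
  have := LinearMap.ext_iff.mp (hs a) f
  simpa using this

lemma pow_shift_comm (hs : IsShiftInvariant d) (i : ℕ) (a : K) :
    ∀ f : K[X], (d ^ i) (shiftOp K a f) = shiftOp K a ((d ^ i) f) := by
  induction i with
  | zero => intro f; simp
  | succ n ih =>
    intro f
    rw [pow_succ, Module.End.mul_apply, Module.End.mul_apply, shift_comm_single hs, ih]

end aux

section fwd
variable {K : Type*} [Field K] [CharZero K] {d : Module.End K (Polynomial K)}
  {z : ℕ → K} {t : ℕ → Polynomial K}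

lemma keyA (hs : IsShiftInvariant d) (ht : IsGoncarovBasis d z t)
    (hbin : ∀ (n : ℕ) (y : K), (t n).comp (X + C y) =
        ∑ k ∈ Finset.range (n + 1), (n.choose k : K) • ((t (n - k)).eval y • t k))
    (i n : ℕ) (y : K) :
    ((d ^ i) (t n)).eval (z i + y)
      = ((n.choose i * i.factorial : ℕ) : K) * (t (n - i)).eval y := by
  have h2 : shiftOp K y (t n)
      = ∑ k ∈ Finset.range (n+1), (n.choose k : K) • ((t (n-k)).eval y • t k) := by
    rw [shiftOp_apply]; exact hbin n y
  have step : ((d ^ i) (t n)).eval (z i + y)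
      = ∑ k ∈ Finset.range (n+1),
          (n.choose k : K) * ((t (n-k)).eval y * ((d ^ i) (t k)).eval (z i)) := by
    rw [← shiftOp_eval, ← pow_shift_comm hs, h2, map_sum]
    simp [eval_finset_sum, smul_eq_mul, mul_assoc]
  rw [step]
  have : ∀ k ∈ Finset.range (n+1),
      (n.choose k : K) * ((t (n-k)).eval y * ((d ^ i) (t k)).eval (z i))
      = if i = k then (n.choose k : K) * ((t (n-k)).eval y * (k.factorial : K)) else 0 := by
    intro k _
    rw [(ht k).2 i]
    split <;> simp
  rw [Finset.sum_congr rfl this, Finset.sum_ite_eq]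
  by_cases hin : i ∈ Finset.range (n+1)
  · rw [if_pos hin]; push_cast; ring
  · rw [if_neg hin]
    have hlt : n < i := by simpa using hin
    simp [Nat.choose_eq_zero_of_lt hlt]

lemma keyB (hs : IsShiftInvariant d) (ht : IsGoncarovBasis d z t)
    (hbin : ∀ (n : ℕ) (y : K), (t n).comp (X + C y) =
        ∑ k ∈ Finset.range (n + 1), (n.choose k : K) • ((t (n - k)).eval y • t k))
    (i n : ℕ) :
    (d ^ i) (t n) = ((n.choose i * i.factorial : ℕ) : K) • shiftOp K (-(z i)) (t (n - i)) := by
  apply Polynomial.funext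
  intro x
  have := keyA hs ht hbin i n (x - z i)
  rw [add_sub_cancel] at this
  rw [this, eval_smul, shiftOp_eval, smul_eq_mul]
  ring_nf

lemma z_add (hs : IsShiftInvariant d) (ht : IsGoncarovBasis d z t)
    (hbin : ∀ (n : ℕ) (y : K), (t n).comp (X + C y) =
        ∑ k ∈ Finset.range (n + 1), (n.choose k : K) • ((t (n - k)).eval y • t k))
    (i j : ℕ) : z (i + j) = z i + z j := by
  set n := i + j + 1 with hn
  -- compute d^(i+j) (t n) in two ways
  have h1 : (d ^ (i + j)) (t n)
      = ((n.choose i * i.factorial : ℕ) : K) •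
          (((j+1).choose j * j.factorial : ℕ) : K) •
            shiftOp K (-(z j) + -(z i)) (t 1) := by
    have e1 : (d ^ (i + j)) (t n) = (d ^ j) ((d ^ i) (t n)) := by
      rw [add_comm i j, pow_add, Module.End.mul_apply]
    rw [e1, keyB hs ht hbin i n]
    have hni : n - i = j + 1 := by omega
    rw [hni, map_smul, pow_shift_comm hs, keyB hs ht hbin j (j+1)]
    have : j + 1 - j = 1 := by omega
    rw [this, map_smul, shiftOp_shiftOp]
  have h2 := keyA hs ht hbin (i+j) n 0
  rw [h1] at h2
  have hc1 : (n.choose (i+j) * (i+j).factorial : ℕ) = n.factorial := by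
    have := Nat.choose_mul_factorial_mul_factorial (show i + j ≤ n by omega)
    have hsub : n - (i+j) = 1 := by omega
    rw [hsub] at this
    simpa using this
  have hc2 : (n.choose i * i.factorial) * ((j+1).choose j * j.factorial) = n.factorial := by
    have e1 := Nat.choose_mul_factorial_mul_factorial (show i ≤ n by omega)
    have e2 := Nat.choose_mul_factorial_mul_factorial (show j ≤ j + 1 by omega)
    have hs1 : n - i = j + 1 := by omega
    have hs2 : j + 1 - j = 1 := by omega
    rw [hs1] at e1; rw [hs2] at e2
    simp only [Nat.factorial_one, mul_one] at e2
    rw [← e1, ← e2]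
  have hsub1 : n - (i + j) = 1 := by omega
  rw [hsub1, hc1] at h2
  rw [eval_smul, eval_smul, shiftOp_eval, smul_eq_mul, smul_eq_mul, ← mul_assoc] at h2
  rw [show ((n.choose i * i.factorial : ℕ) : K) * (((j+1).choose j * j.factorial : ℕ) : K)
      = ((n.factorial : ℕ) : K) by rw [← Nat.cast_mul, hc2]] at h2
  -- h2 : n! * t1.eval (z (i+j) + 0 + (-(z j) + -(z i))) = n! * t1.eval 0
  have hfac : ((n.factorial : ℕ) : K) ≠ 0 := by
    exact_mod_cast Nat.factorial_ne_zero n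
  have h3 : (t 1).eval (z (i+j) + 0 + (-(z j) + -(z i))) = (t 1).eval 0 :=
    mul_left_cancel₀ hfac h2
  -- use the explicit form of t 1
  have hdeg : (t 1).natDegree ≤ 1 := le_of_eq (ht 1).1
  have ht1 := Polynomial.eq_X_add_C_of_natDegree_le_one hdeg
  have ha : (t 1).coeff 1 ≠ 0 := by
    intro h
    have : (t 1).natDegree = 0 := by
      apply Polynomial.natDegree_eq_zero.mpr
      exact ⟨(t 1).coeff 0, by rw [ht1, h]; simp⟩
    rw [(ht 1).1] at this; omega
  rw [ht1] at h3
  simp only [eval_add, eval_mul, eval_C, eval_X, mul_zero, zero_add] at h3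
  have hz : (t 1).coeff 1 * (z (i+j) + 0 + (-(z j) + -(z i))) = 0 := by
    linear_combination h3
  have := (mul_eq_zero.mp hz).resolve_left ha
  linear_combination this

lemma fwd_conclusion (hs : IsShiftInvariant d) (ht : IsGoncarovBasis d z t)
    (hbin : ∀ (n : ℕ) (y : K), (t n).comp (X + C y) =
        ∑ k ∈ Finset.range (n + 1), (n.choose k : K) • ((t (n - k)).eval y • t k)) :
    ∃ b : K, ∀ i : ℕ, z i = (i : K) * b := by
  refine ⟨z 1, ?_⟩
  intro i
  induction i with
  | zero =>
    have h0 := z_add hs ht hbin 0 0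
    simp only [Nat.add_zero] at h0
    have : z 0 = 0 := by linear_combination -h0
    simp [this]
  | succ m ih =>
    have := z_add hs ht hbin m 1
    rw [this, ih]
    push_cast
    ring

end fwd

section bwd
variable {K : Type*} [Field K] [CharZero K] {d : Module.End K (Polynomial K)}
  {z : ℕ → K} {t : ℕ → Polynomial K} {b : K}

/-- The modified delta operator `d' = d ∘ E_b`. -/
noncomputable def dB (d : Module.End K (Polynomial K)) (b : K) : Module.End K (Polynomial K) :=
  d ∘ₗ shiftOp K b

lemma dB_pow (hs : IsShiftInvariant d) (i : ℕ) :
    ∀ f : K[X], ((dB d b) ^ i) f = (d ^ i) (shiftOp K ((i : K) * b) f) := by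
  induction i with
  | zero =>
    intro f
    have h : shiftOp K ((0 : ℕ) * b : K) f = f := by
      rw [shiftOp_apply]; push_cast; simp
    rw [pow_zero, pow_zero, Module.End.one_apply, Module.End.one_apply, h]
  | succ n ih =>
    intro f
    have hdB : (dB d b) f = d (shiftOp K b f) := rfl
    rw [pow_succ, Module.End.mul_apply, ih, hdB, ← shift_comm_single hs, shiftOp_shiftOp,
      ← Module.End.mul_apply, ← pow_succ]
    congr 2
    push_cast
    ring

/-- The linear functional `f ↦ (d^i f)(z i)`. -/
noncomputable def Lv (d : Module.End K (Polynomial K)) (z : ℕ → K) (i : ℕ) :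
    Polynomial K →ₗ[K] K :=
  (Polynomial.leval (z i)) ∘ₗ (d ^ i)

lemma Lv_apply (i : ℕ) (f : K[X]) : Lv d z i f = ((d ^ i) f).eval (z i) := rfl

lemma Lv_t (ht : IsGoncarovBasis d z t) (i n : ℕ) :
    Lv d z i (t n) = if i = n then (n.factorial : K) else 0 := (ht n).2 i

lemma Lv_dB (hs : IsShiftInvariant d) (hb : ∀ i : ℕ, z i = (i : K) * b)
    (i j : ℕ) (f : K[X]) :
    Lv d z i (((dB d b) ^ j) f) = Lv d z (i + j) f := by
  rw [Lv_apply, Lv_apply, dB_pow hs, ← Module.End.mul_apply, ← pow_add,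
    pow_shift_comm hs, shiftOp_eval, hb i, hb (i+j)]
  congr 1
  push_cast
  ring

lemma t_zero (ht : IsGoncarovBasis d z t) : t 0 = 1 := by
  have h0 := (ht 0).2 0
  have hC := Polynomial.eq_C_of_natDegree_le_zero (le_of_eq (ht 0).1)
  rw [hC] at h0
  simp only [pow_zero, Module.End.one_apply, eval_C, if_pos, Nat.factorial_zero,
    Nat.cast_one] at h0
  rw [hC, h0, map_one]

lemma t_mem_span (ht : IsGoncarovBasis d z t) :
    ∀ (N : ℕ) (f : K[X]), f.natDegree ≤ N → f ∈ Submodule.span K (Set.range t) := by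
  intro N
  induction N with
  | zero =>
    intro f hf
    rw [Polynomial.eq_C_of_natDegree_le_zero hf]
    have : C (f.coeff 0) = f.coeff 0 • t 0 := by
      rw [t_zero ht, smul_eq_C_mul, mul_one]
    rw [this]
    exact Submodule.smul_mem _ _ (Submodule.subset_span ⟨0, rfl⟩)
  | succ N ih =>
    intro f hf
    have htne : t (N+1) ≠ 0 := by
      intro h
      have := (ht (N+1)).1
      rw [h] at this
      simp at this
    set c := f.coeff (N+1) / (t (N+1)).leadingCoeff with hc
    have hg : (f - c • t (N+1)).natDegree ≤ N := by
      rw [Polynomial.natDegree_le_iff_coeff_eq_zero]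
      intro M hM
      rcases eq_or_lt_of_le (Nat.succ_le_of_lt hM) with h | h
      · rw [coeff_sub, coeff_smul, ← h, smul_eq_mul]
        have hcoe : (t (N+1)).coeff (N+1) = (t (N+1)).leadingCoeff := by
          rw [Polynomial.leadingCoeff, (ht (N+1)).1]
        rw [hcoe, hc, div_mul_cancel₀ _ (Polynomial.leadingCoeff_ne_zero.mpr htne)]
        ring
      · rw [coeff_sub, coeff_smul]
        rw [Polynomial.coeff_eq_zero_of_natDegree_lt (lt_of_le_of_lt hf h),
          Polynomial.coeff_eq_zero_of_natDegree_lt (by rw [(ht (N+1)).1]; exact h)]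
        simp
    have hmem := ih _ hg
    have : f = (f - c • t (N+1)) + c • t (N+1) := by ring
    rw [this]
    exact Submodule.add_mem _ hmem
      (Submodule.smul_mem _ _ (Submodule.subset_span ⟨N+1, rfl⟩))

lemma Lv_zero (ht : IsGoncarovBasis d z t) (f : K[X])
    (h0 : ∀ i, Lv d z i f = 0) : f = 0 := by
  obtain ⟨c, hcf⟩ := Finsupp.mem_span_range_iff_exists_finsupp.mp
    (t_mem_span ht f.natDegree f le_rfl)
  suffices hcz : c = 0 by
    rw [← hcf, hcz]; simp
  ext j
  have hLj : Lv d z j f = c j * (j.factorial : K) := by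
    rw [← hcf, map_finsuppSum]
    have : (c.sum fun i a => Lv d z j (a • t i)) = c.sum fun i a => a * Lv d z j (t i) := by
      apply Finsupp.sum_congr
      intro i _
      rw [map_smul, smul_eq_mul]
    rw [this]
    rw [Finsupp.sum_eq_single j ?h0 ?h1]
    · rw [Lv_t ht, if_pos rfl]
    case h0 =>
      intro i _ hij
      rw [Lv_t ht, if_neg (Ne.symm hij), mul_zero]
    case h1 => simp
  rw [h0 j] at hLj
  have hcj : c j = 0 := by
    rcases mul_eq_zero.mp hLj.symm with h | h
    · exact h
    · exact absurd h (by exact_mod_cast Nat.factorial_ne_zero j)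
  simpa using hcj

lemma Lv_ext (ht : IsGoncarovBasis d z t) (f g : K[X])
    (h : ∀ i, Lv d z i f = Lv d z i g) : f = g := by
  have : f - g = 0 := Lv_zero ht _ (fun i => by rw [map_sub, h i, sub_self])
  linear_combination this

end bwd

section bwd2
variable {K : Type*} [Field K] [CharZero K] {d : Module.End K (Polynomial K)}
  {z : ℕ → K} {t : ℕ → Polynomial K} {b : K}

lemma dB_t (hs : IsShiftInvariant d) (ht : IsGoncarovBasis d z t)
    (hb : ∀ i : ℕ, z i = (i : K) * b) (j n : ℕ) :
    ((dB d b) ^ j) (t n) = ((n.choose j * j.factorial : ℕ) : K) • t (n - j) := by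
  apply Lv_ext ht
  intro i
  rw [Lv_dB hs hb, Lv_t ht, map_smul, Lv_t ht, smul_eq_mul]
  by_cases hjn : j ≤ n
  · by_cases hi : i = n - j
    · rw [if_pos hi, if_pos (by omega)]
      subst hi
      rw [← Nat.cast_mul]
      exact Nat.cast_inj.mpr (Nat.choose_mul_factorial_mul_factorial hjn).symm
    · rw [if_neg hi, if_neg (by omega), mul_zero]
  · rw [if_neg (by omega), Nat.choose_eq_zero_of_lt (by omega)]
    simp

lemma bwd_binomial (hs : IsShiftInvariant d) (ht : IsGoncarovBasis d z t)
    (hb : ∀ i : ℕ, z i = (i : K) * b) (n : ℕ) (y : K) :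
    (t n).comp (X + C y) =
      ∑ k ∈ Finset.range (n + 1), (n.choose k : K) • ((t (n - k)).eval y • t k) := by
  apply Lv_ext ht
  intro j
  -- LHS
  have hL : Lv d z j ((t n).comp (X + C y))
      = ((n.choose j * j.factorial : ℕ) : K) * (t (n - j)).eval y := by
    rw [← shiftOp_apply, Lv_apply, pow_shift_comm hs, shiftOp_eval, hb j]
    have h1 : Lv d z j (((dB d b) ^ 0) (t n)) = Lv d z j (t n) := by
      rw [pow_zero, Module.End.one_apply]
    -- express via dB
    have h2 : ((d ^ j) (t n)).eval ((j : K) * b + y)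
        = (((dB d b) ^ j) (t n)).eval y := by
      rw [dB_pow hs, pow_shift_comm hs, shiftOp_eval]
      ring_nf
    rw [h2, dB_t hs ht hb, eval_smul, smul_eq_mul]
  rw [hL, map_sum]
  have hterm : ∀ k ∈ Finset.range (n+1),
      Lv d z j ((n.choose k : K) • ((t (n-k)).eval y • t k))
      = if j = k then (n.choose k : K) * ((t (n-k)).eval y * (k.factorial : K)) else 0 := by
    intro k _
    rw [map_smul, map_smul, Lv_t ht, smul_eq_mul, smul_eq_mul]
    split <;> simp
  rw [Finset.sum_congr rfl hterm, Finset.sum_ite_eq]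
  by_cases hjn : j ≤ n
  · rw [if_pos (Finset.mem_range.mpr (by omega))]
    push_cast
    ring
  · rw [if_neg (by simp; omega), Nat.choose_eq_zero_of_lt (by omega)]
    simp

end bwd2

theorem stmt19 {K : Type*} [Field K] [CharZero K] (d : Module.End K (Polynomial K))
    (hd : IsDeltaOperator d) (z : ℕ → K) (t : ℕ → Polynomial K)
    (ht : IsGoncarovBasis d z t) :
    (∀ (n : ℕ) (y : K), (t n).comp (X + C y) =
        ∑ k ∈ Finset.range (n + 1), (n.choose k : K) • ((t (n - k)).eval y • t k)) ↔
    ∃ b : K, ∀ i : ℕ, z i = (i : K) * b := by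
  constructor
  · intro hbin
    exact fwd_conclusion hd.1 ht hbin
  · rintro ⟨b, hb⟩
    intro n y
    exact bwd_binomial hd.1 ht hb n y
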